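/- For any atomic proposition p, the contraction rules (from Γ, p, p ⇒ Δ infer Γ, p ⇒ Δ) and (from Γ ⇒ p, p, Δ infer Γ ⇒ p, Δ) are strongly admissible in Grz∞+cut. -/

import Mathlib

/-- Modal formulas of the Grzegorczyk logic: ⊥, atoms, →, □. -/
inductive Formula : Type
  | bot : Formula
  | atom : ℕ → Formula
  | imp : Formula → Formula → Formula
  | box : Formula → Formula
deriving DecidableEq

/-- A sequent Γ ⇒ Δ is a pair of finite multisets of formulas. -/
abbrev Sequent : Type := Multiset Formula × Multiset Formula

/-- Names of the inference rules of Grz∞ + cut (including the two kinds of initial sequents). -/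
inductive Rule : Type
  | ax | axBot | impL | impR | refl | box | cut
deriving DecidableEq

/-- □Π for a multiset Π. -/
def boxed (P : Multiset Formula) : Multiset Formula := P.map Formula.box

/-- `Inst r s p₁ p₂` : the rule `r` has a (correct) instance with conclusion `s`,
first premise `p₁` and second premise `p₂` (`none` = no such premise). -/
inductive Inst : Rule → Sequent → Option Sequent → Option Sequent → Prop
  | ax (Γ Δ : Multiset Formula) (p : ℕ) :
      Inst .ax (Formula.atom p ::ₘ Γ, Formula.atom p ::ₘ Δ) none none
  | axBot (Γ Δ : Multiset Formula) :
      Inst .axBot (Formula.bot ::ₘ Γ, Δ) none none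
  | impL (Γ Δ : Multiset Formula) (A B : Formula) :
      Inst .impL (Formula.imp A B ::ₘ Γ, Δ) (some (B ::ₘ Γ, Δ)) (some (Γ, A ::ₘ Δ))
  | impR (Γ Δ : Multiset Formula) (A B : Formula) :
      Inst .impR (Γ, Formula.imp A B ::ₘ Δ) (some (A ::ₘ Γ, B ::ₘ Δ)) none
  | refl (Γ Δ : Multiset Formula) (A : Formula) :
      Inst .refl (Formula.box A ::ₘ Γ, Δ) (some (A ::ₘ Formula.box A ::ₘ Γ, Δ)) none
  | box (Γ Δ : Multiset Formula) (A : Formula) (P : Multiset Formula) :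
      Inst .box (Γ + boxed P, Formula.box A ::ₘ Δ) (some (Γ + boxed P, A ::ₘ Δ))
        (some (boxed P, {A}))
  | cut (Γ Δ : Multiset Formula) (A : Formula) :
      Inst .cut (Γ, Δ) (some (Γ, A ::ₘ Δ)) (some (A ::ₘ Γ, Δ))

/-- A labelling of tree addresses (lists of booleans; `true` = second/right child)
by a rule name together with a sequent; `none` means the address is outside the tree. -/
abbrev Lab : Type := List Bool → Option (Rule × Sequent)

/-- The labelling of the subtree at child `i`. -/
def shift (i : Bool) (l : Lab) : Lab := fun a => l (i :: a)

/-- An ∞-proof in Grz∞ + cut: a possibly infinite tree of sequents built according to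
the rules, in which every infinite branch passes through the right premise of the
rule (□) infinitely many times. -/
structure InfProof : Type where
  lab : Lab
  root_some : (lab []).isSome
  nojunk : ∀ (a : List Bool) (i : Bool), lab a = none → lab (a ++ [i]) = none
  step : ∀ (a : List Bool) (r : Rule) (s : Sequent), lab a = some (r, s) →
      Inst r s ((lab (a ++ [false])).map Prod.snd) ((lab (a ++ [true])).map Prod.snd)
  branch : ∀ f : ℕ → Bool, (∀ n : ℕ, (lab ((List.range n).map f)).isSome) →
      ∀ N : ℕ, ∃ n : ℕ, N ≤ n ∧ f n = true ∧
        (lab ((List.range n).map f)).map Prod.fst = some Rule.box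

/-- The sequent at the root of an ∞-proof. -/
def rootSeq (π : InfProof) : Sequent := ((π.lab []).map Prod.snd).getD (0, 0)

/-- `Proves π S` : the ∞-proof `π` is an ∞-proof of the sequent `S`. -/
def Proves (π : InfProof) (S : Sequent) : Prop := ∃ r : Rule, π.lab [] = some (r, S)

/-- An ∞-proof contains no application of the cut rule (i.e. it is a proof of Grz∞). -/
def NoCut (π : InfProof) : Prop := ∀ (a : List Bool) (r : Rule) (s : Sequent),
  π.lab a = some (r, s) → r ≠ Rule.cut

/-- Membership of an address in the main fragment: no proper passage through a
right premise of (□) strictly below it. -/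
def InMain (l : Lab) (a : List Bool) : Prop :=
  (l a).isSome ∧ ∀ (b c : List Bool), a = b ++ true :: c →
    (l b).map Prod.fst = some Rule.box → c = []

/-- The local height |π| : the length of the longest branch in the main fragment. -/
noncomputable def height (l : Lab) : ℕ := sSup {n : ℕ | ∃ a : List Bool, InMain l a ∧ a.length = n}

/-- The relations ∼ₙ on ∞-proofs (presented on labellings), defined inductively:
π ∼₀ τ always; a single-node proof is ∼ₙ-related to itself; proofs ending in the same
instance of (→L), (cut), (→R), (refl) are ∼ₙ-related when their immediate subproofs are;
proofs ending in the same instance of (□) are ∼ₙ₊₁-related when the left-premise subproofs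
are ∼ₙ₊₁-related and the right-premise subproofs are ∼ₙ-related. -/
inductive Sim : ℕ → Lab → Lab → Prop
  | zero (l m : Lab) : Sim 0 l m
  | leaf (n : ℕ) (l : Lab) : height l = 0 → Sim n l l
  | bin (n : ℕ) (l m : Lab) (r : Rule) (s : Sequent) :
      (r = Rule.impL ∨ r = Rule.cut) →
      l [] = some (r, s) → m [] = some (r, s) →
      (l [false]).map Prod.snd = (m [false]).map Prod.snd →
      (l [true]).map Prod.snd = (m [true]).map Prod.snd →
      Sim n (shift false l) (shift false m) → Sim n (shift true l) (shift true m) →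
      Sim n l m
  | un (n : ℕ) (l m : Lab) (r : Rule) (s : Sequent) :
      (r = Rule.impR ∨ r = Rule.refl) →
      l [] = some (r, s) → m [] = some (r, s) →
      (l [false]).map Prod.snd = (m [false]).map Prod.snd →
      Sim n (shift false l) (shift false m) →
      Sim n l m
  | box (n : ℕ) (l m : Lab) (s : Sequent) :
      l [] = some (Rule.box, s) → m [] = some (Rule.box, s) →
      (l [false]).map Prod.snd = (m [false]).map Prod.snd →
      (l [true]).map Prod.snd = (m [true]).map Prod.snd →
      Sim (n + 1) (shift false l) (shift false m) → Sim n (shift true l) (shift true m) →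
      Sim (n + 1) l m

/-- The sets 𝒫ₙ of ∞-proofs (presented on labellings), defined inductively:
𝒫₀ is everything; single-node proofs are in every 𝒫ₙ; (→L), (→R), (refl) preserve
membership in 𝒫ₙ; a proof ending in (□) with left-premise subproof in 𝒫ₙ₊₁ and
right-premise subproof in 𝒫ₙ is in 𝒫ₙ₊₁. -/
inductive MemP : ℕ → Lab → Prop
  | zero (l : Lab) : MemP 0 l
  | leaf (n : ℕ) (l : Lab) : height l = 0 → MemP n l
  | bin (n : ℕ) (l : Lab) (s : Sequent) :
      l [] = some (Rule.impL, s) →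
      MemP n (shift false l) → MemP n (shift true l) → MemP n l
  | un (n : ℕ) (l : Lab) (r : Rule) (s : Sequent) :
      (r = Rule.impR ∨ r = Rule.refl) →
      l [] = some (r, s) → MemP n (shift false l) → MemP n l
  | box (n : ℕ) (l : Lab) (s : Sequent) :
      l [] = some (Rule.box, s) →
      MemP (n + 1) (shift false l) → MemP n (shift true l) → MemP (n + 1) l

/- The metric d(π,τ) = 2^(−sup{n : π ∼ₙ τ}), with 2^(−∞) = 0. -/
open Classical in
noncomputable def pdist (π τ : InfProof) : ℝ :=
  if ∀ n : ℕ, Sim n π.lab τ.lab then 0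
  else (2 : ℝ) ^ (-((sSup {n : ℕ | Sim n π.lab τ.lab} : ℕ) : ℤ))

/-- A mapping on ∞-proofs is nonexpansive if it preserves all relations ∼ₙ. -/
def Nonexpansive (f : InfProof → InfProof) : Prop :=
  ∀ (n : ℕ) (π τ : InfProof), Sim n π.lab τ.lab → Sim n (f π).lab (f τ).lab

/-- A mapping is adequate if it is nonexpansive, maps 𝒫₁ into 𝒫₁,
and does not increase local height. -/
def Adequate (f : InfProof → InfProof) : Prop :=
  Nonexpansive f ∧ (∀ π : InfProof, MemP 1 π.lab → MemP 1 (f π).lab) ∧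
    ∀ π : InfProof, height (f π).lab ≤ height π.lab

/-- The set 𝒫₁ of ∞-proofs whose main fragment is cut-free, as a subtype. -/
abbrev P1 : Type := {π : InfProof // MemP 1 π.lab}

/-- An A-reducing mapping: a nonexpansive map ℛ : 𝒫₁ × 𝒫₁ → 𝒫₁ such that
ℛ(π′,π″) proves Γ ⇒ Δ whenever π′ proves Γ ⇒ Δ, A and π″ proves A, Γ ⇒ Δ. -/
def Reducing (A : Formula) (R : P1 → P1 → P1) : Prop :=
  (∀ (n : ℕ) (p₁ p₂ q₁ q₂ : P1), Sim n p₁.1.lab q₁.1.lab → Sim n p₂.1.lab q₂.1.lab →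
      Sim n (R p₁ p₂).1.lab (R q₁ q₂).1.lab) ∧
  ∀ (p₁ p₂ : P1) (Γ Δ : Multiset Formula),
    Proves p₁.1 (Γ, A ::ₘ Δ) → Proves p₂.1 (A ::ₘ Γ, Δ) → Proves (R p₁ p₂).1 (Γ, Δ)

/-- A mapping is root-preserving if it maps ∞-proofs to ∞-proofs of the same sequent. -/
def RootPres (f : InfProof → InfProof) : Prop :=
  ∀ (π : InfProof) (S : Sequent), Proves π S → Proves (f π) S

/-- The uniform distance on mappings of ∞-proofs. -/
noncomputable def udist (U V : InfProof → InfProof) : ℝ :=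
  ⨆ π : InfProof, pdist (U π) (V π)

/- The immediate subproof of `π` at child `i` (junk value `π` if there is none). -/
open Classical in
noncomputable def subtree (π : InfProof) (i : Bool) : InfProof :=
  if h : ∃ τ : InfProof, τ.lab = shift i π.lab then h.choose else π

/-- `IsFOp E F` : `F` is the operator ℱ (relative to the one-step cut-elimination map
`E` = ℰ*) defined by: on proofs with cut-free main fragment it commutes with the last
rule, applying `U` at right premises of (□) and fixing single-node proofs; on other
proofs it first applies `E`. -/
def IsFOp (E : InfProof → InfProof) (F : (InfProof → InfProof) → InfProof → InfProof) : Prop :=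
  ∀ (U : InfProof → InfProof) (π : InfProof),
    (MemP 1 π.lab → height π.lab = 0 → F U π = π) ∧
    (∀ (r : Rule) (s : Sequent), MemP 1 π.lab → π.lab [] = some (r, s) →
        r ≠ Rule.box → r ≠ Rule.cut → height π.lab ≠ 0 →
        (F U π).lab [] = some (r, s) ∧
        shift false (F U π).lab = (F U (subtree π false)).lab ∧
        (r = Rule.impL → shift true (F U π).lab = (F U (subtree π true)).lab)) ∧
    (∀ s : Sequent, MemP 1 π.lab → π.lab [] = some (Rule.box, s) →
        (F U π).lab [] = some (Rule.box, s) ∧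
        shift false (F U π).lab = (F U (subtree π false)).lab ∧
        shift true (F U π).lab = (U (subtree π true)).lab) ∧
    (¬ MemP 1 π.lab → F U π = F U (E π))

/-- Membership in 𝒩ₙ : a root-preserving nonexpansive map whose image lies in 𝒫ₙ. -/
def InN (n : ℕ) (U : InfProof → InfProof) : Prop :=
  Nonexpansive U ∧ RootPres U ∧ ∀ π : InfProof, MemP n (U π).lab

/-- The finitary sequent calculus Grz_Seq (with cut allowed iff the flag is `true`). -/
inductive GrzSeq : Bool → Sequent → Prop
  | ax (c : Bool) (Γ Δ : Multiset Formula) (A : Formula) :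
      GrzSeq c (A ::ₘ Γ, A ::ₘ Δ)
  | bot (c : Bool) (Γ Δ : Multiset Formula) :
      GrzSeq c (Formula.bot ::ₘ Γ, Δ)
  | impL (c : Bool) (Γ Δ : Multiset Formula) (A B : Formula) :
      GrzSeq c (B ::ₘ Γ, Δ) → GrzSeq c (Γ, A ::ₘ Δ) →
      GrzSeq c (Formula.imp A B ::ₘ Γ, Δ)
  | impR (c : Bool) (Γ Δ : Multiset Formula) (A B : Formula) :
      GrzSeq c (A ::ₘ Γ, B ::ₘ Δ) → GrzSeq c (Γ, Formula.imp A B ::ₘ Δ)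
  | refl (c : Bool) (Γ Δ : Multiset Formula) (B : Formula) :
      GrzSeq c (B ::ₘ Formula.box B ::ₘ Γ, Δ) → GrzSeq c (Formula.box B ::ₘ Γ, Δ)
  | grz (c : Bool) (Γ Δ : Multiset Formula) (A : Formula) (P : Multiset Formula) :
      GrzSeq c (Formula.box (Formula.imp A (Formula.box A)) ::ₘ boxed P, {A}) →
      GrzSeq c (Γ + boxed P, Formula.box A ::ₘ Δ)
  | cut (Γ Δ : Multiset Formula) (A : Formula) :
      GrzSeq true (Γ, A ::ₘ Δ) → GrzSeq true (A ::ₘ Γ, Δ) → GrzSeq true (Γ, Δ)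

section ContractionAux

open Classical

/-- No passage (proper or final) through a right premise of (□) on the way to `a`. -/
def CtrSet (l : Lab) (a : List Bool) : Prop :=
  ∀ b c, a = b ++ true :: c → (l b).map Prod.fst ≠ some Rule.box

lemma ctrSet_nil (l : Lab) : CtrSet l [] := by
  intro b c h
  exact absurd h (by simp)

lemma ctrSet_cons_false (l : Lab) (a : List Bool) :
    CtrSet l (false :: a) ↔ CtrSet (shift false l) a := by
  constructor
  · intro h b c hbc
    exact h (false :: b) c (by rw [hbc]; rfl)
  · intro h b c hbc
    cases b with
    | nil => simp at hbc
    | cons j b' =>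
      simp only [List.cons_append, List.cons.injEq] at hbc
      obtain ⟨rfl, h2⟩ := hbc
      exact h b' c h2

lemma ctrSet_cons_true (l : Lab) (a : List Bool) :
    CtrSet l (true :: a) ↔
      ((l []).map Prod.fst ≠ some Rule.box ∧ CtrSet (shift true l) a) := by
  constructor
  · intro h
    refine ⟨h [] a rfl, ?_⟩
    intro b c hbc
    exact h (true :: b) c (by rw [hbc]; rfl)
  · rintro ⟨h0, h⟩ b c hbc
    cases b with
    | nil =>
      simp only [List.nil_append, List.cons.injEq, true_and] at hbc
      subst hbc
      exact h0
    | cons j b' =>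
      simp only [List.cons_append, List.cons.injEq] at hbc
      obtain ⟨rfl, h2⟩ := hbc
      exact h b' c h2

lemma ctrSet_snoc (l : Lab) (a : List Bool) (i : Bool) :
    CtrSet l (a ++ [i]) ↔
      (CtrSet l a ∧ (i = true → (l a).map Prod.fst ≠ some Rule.box)) := by
  constructor
  · intro h
    constructor
    · intro b c hbc
      exact h b (c ++ [i]) (by rw [hbc]; simp)
    · rintro rfl
      exact h a [] (by simp)
  · rintro ⟨h1, h2⟩ b c hbc
    rcases List.eq_nil_or_concat c with rfl | ⟨c', j, rfl⟩
    · obtain ⟨rfl, hi⟩ := List.append_inj' hbc rfl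
      injection hi with hi _
      exact h2 hi
    · have hbc' : a ++ [i] = (b ++ true :: c') ++ [j] := by rw [hbc]; simp
      exact h1 b c' (List.append_inj' hbc' rfl).1

/-- Contract (apply `g` to) the sequents of all nodes reachable without
passing through a right premise of (□). -/
noncomputable def ctrLab (g : Sequent → Sequent) (l : Lab) : Lab :=
  fun a => if CtrSet l a then (l a).map (fun rs => (rs.1, g rs.2)) else l a

lemma ctrLab_of_ctr {g l a} (h : CtrSet l a) :
    ctrLab g l a = (l a).map (fun rs => (rs.1, g rs.2)) := if_pos h

lemma ctrLab_of_not {g l a} (h : ¬ CtrSet l a) : ctrLab g l a = l a := if_neg h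

lemma ctrLab_fst (g : Sequent → Sequent) (l : Lab) (a : List Bool) :
    (ctrLab g l a).map Prod.fst = (l a).map Prod.fst := by
  unfold ctrLab
  split
  · cases l a <;> simp
  · rfl

lemma ctrLab_isSome (g : Sequent → Sequent) (l : Lab) (a : List Bool) :
    (ctrLab g l a).isSome = (l a).isSome := by
  unfold ctrLab
  split
  · cases l a <;> simp
  · rfl

lemma ctrLab_none {g : Sequent → Sequent} {l : Lab} {a : List Bool} (h : l a = none) :
    ctrLab g l a = none := by
  unfold ctrLab
  split <;> simp [h]

lemma ctrLab_none_iff {g : Sequent → Sequent} {l : Lab} {a : List Bool} :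
    ctrLab g l a = none ↔ l a = none := by
  unfold ctrLab
  split <;> cases l a <;> simp

lemma ctrLab_snd_of_ctr {g l a} (h : CtrSet l a) :
    (ctrLab g l a).map Prod.snd = ((l a).map Prod.snd).map g := by
  rw [ctrLab_of_ctr h]
  cases l a <;> rfl

lemma shift_false_ctrLab (g : Sequent → Sequent) (l : Lab) :
    shift false (ctrLab g l) = ctrLab g (shift false l) := by
  funext a
  show ctrLab g l (false :: a) = _
  unfold ctrLab
  exact if_congr (ctrSet_cons_false l a) rfl rfl

lemma shift_true_ctrLab_box {g : Sequent → Sequent} {l : Lab}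
    (h : (l []).map Prod.fst = some Rule.box) :
    shift true (ctrLab g l) = shift true l := by
  funext a
  show ctrLab g l (true :: a) = _
  exact ctrLab_of_not (fun hc => ((ctrSet_cons_true l a).mp hc).1 h)

lemma shift_true_ctrLab_nonbox {g : Sequent → Sequent} {l : Lab}
    (h : (l []).map Prod.fst ≠ some Rule.box) :
    shift true (ctrLab g l) = ctrLab g (shift true l) := by
  funext a
  show ctrLab g l (true :: a) = _
  unfold ctrLab
  exact if_congr ⟨fun hc => ((ctrSet_cons_true l a).mp hc).2,
    fun hc => (ctrSet_cons_true l a).mpr ⟨h, hc⟩⟩ rfl rfl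

lemma inMain_ctrLab (g : Sequent → Sequent) (l : Lab) (a : List Bool) :
    InMain (ctrLab g l) a ↔ InMain l a := by
  unfold InMain
  rw [ctrLab_isSome]
  simp only [ctrLab_fst]

lemma height_ctrLab (g : Sequent → Sequent) (l : Lab) :
    height (ctrLab g l) = height l := by
  unfold height
  congr 1
  ext n
  simp only [Set.mem_setOf_eq, inMain_ctrLab]

end ContractionAux
section ContractionAux2

lemma ctrSet_single_false (l : Lab) : CtrSet l [false] :=
  (ctrSet_cons_false l []).mpr (ctrSet_nil _)

lemma ctrSet_single_true {l : Lab} (h : (l []).map Prod.fst ≠ some Rule.box) :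
    CtrSet l [true] :=
  (ctrSet_cons_true l []).mpr ⟨h, ctrSet_nil _⟩

lemma not_ctrSet_single_true {l : Lab} (h : (l []).map Prod.fst = some Rule.box) :
    ¬ CtrSet l [true] :=
  fun hc => ((ctrSet_cons_true l []).mp hc).1 h

lemma sim_ctrLab (g : Sequent → Sequent) {n : ℕ} {l m : Lab} (h : Sim n l m) :
    Sim n (ctrLab g l) (ctrLab g m) := by
  induction h with
  | zero l m => exact .zero _ _
  | leaf n l h => exact .leaf n _ (by rw [height_ctrLab]; exact h)
  | bin n l m r s hr hl hm hf ht _ _ ihf iht =>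
    have hrb : r ≠ Rule.box := by rcases hr with rfl | rfl <;> simp
    have hlb : (l []).map Prod.fst ≠ some Rule.box := by
      rw [hl]; simpa using hrb
    have hmb : (m []).map Prod.fst ≠ some Rule.box := by
      rw [hm]; simpa using hrb
    refine .bin n _ _ r (g s) hr ?_ ?_ ?_ ?_ ?_ ?_
    · rw [ctrLab_of_ctr (ctrSet_nil l), hl]; rfl
    · rw [ctrLab_of_ctr (ctrSet_nil m), hm]; rfl
    · rw [ctrLab_snd_of_ctr (ctrSet_single_false l),
        ctrLab_snd_of_ctr (ctrSet_single_false m), hf]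
    · rw [ctrLab_snd_of_ctr (ctrSet_single_true hlb),
        ctrLab_snd_of_ctr (ctrSet_single_true hmb), ht]
    · rw [shift_false_ctrLab, shift_false_ctrLab]; exact ihf
    · rw [shift_true_ctrLab_nonbox hlb, shift_true_ctrLab_nonbox hmb]; exact iht
  | un n l m r s hr hl hm hf _ ihf =>
    refine .un n _ _ r (g s) hr ?_ ?_ ?_ ?_
    · rw [ctrLab_of_ctr (ctrSet_nil l), hl]; rfl
    · rw [ctrLab_of_ctr (ctrSet_nil m), hm]; rfl
    · rw [ctrLab_snd_of_ctr (ctrSet_single_false l),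
        ctrLab_snd_of_ctr (ctrSet_single_false m), hf]
    · rw [shift_false_ctrLab, shift_false_ctrLab]; exact ihf
  | box n l m s hl hm hf ht _ hst ihf _ =>
    have hlb : (l []).map Prod.fst = some Rule.box := by rw [hl]; rfl
    have hmb : (m []).map Prod.fst = some Rule.box := by rw [hm]; rfl
    refine .box n _ _ (g s) ?_ ?_ ?_ ?_ ?_ ?_
    · rw [ctrLab_of_ctr (ctrSet_nil l), hl]; rfl
    · rw [ctrLab_of_ctr (ctrSet_nil m), hm]; rfl
    · rw [ctrLab_snd_of_ctr (ctrSet_single_false l),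
        ctrLab_snd_of_ctr (ctrSet_single_false m), hf]
    · rw [ctrLab_of_not (not_ctrSet_single_true hlb),
        ctrLab_of_not (not_ctrSet_single_true hmb), ht]
    · rw [shift_false_ctrLab, shift_false_ctrLab]; exact ihf
    · rw [shift_true_ctrLab_box hlb, shift_true_ctrLab_box hmb]; exact hst

lemma memP_ctrLab (g : Sequent → Sequent) {n : ℕ} {l : Lab} (h : MemP n l) :
    MemP n (ctrLab g l) := by
  induction h with
  | zero l => exact .zero _
  | leaf n l h => exact .leaf n _ (by rw [height_ctrLab]; exact h)
  | bin n l s hl _ _ ihf iht =>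
    have hlb : (l []).map Prod.fst ≠ some Rule.box := by rw [hl]; simp
    refine .bin n _ (g s) ?_ ?_ ?_
    · rw [ctrLab_of_ctr (ctrSet_nil l), hl]; rfl
    · rw [shift_false_ctrLab]; exact ihf
    · rw [shift_true_ctrLab_nonbox hlb]; exact iht
  | un n l r s hr hl _ ihf =>
    refine .un n _ r (g s) hr ?_ ?_
    · rw [ctrLab_of_ctr (ctrSet_nil l), hl]; rfl
    · rw [shift_false_ctrLab]; exact ihf
  | box n l s hl _ ht ihf _ =>
    have hlb : (l []).map Prod.fst = some Rule.box := by rw [hl]; rfl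
    refine .box n _ (g s) ?_ ?_ ?_
    · rw [ctrLab_of_ctr (ctrSet_nil l), hl]; rfl
    · rw [shift_false_ctrLab]; exact ihf
    · rw [shift_true_ctrLab_box hlb]; exact ht

lemma sim_succ_root {n : ℕ} {l m : Lab} (h : Sim (n + 1) l m) : l [] = m [] := by
  cases h with
  | leaf => rfl
  | bin _ _ _ _ _ _ hl hm => rw [hl, hm]
  | un _ _ _ _ _ _ hl hm => rw [hl, hm]
  | box _ _ _ _ hl hm => rw [hl, hm]

end ContractionAux2
section ContractionAux3

lemma exists_ctrProof (g : Sequent → Sequent) (Inv : Sequent → Prop)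
    (H1 : ∀ r s o1 o2, Inst r s o1 o2 → Inv s →
      Inst r (g s) (o1.map g) (if r = Rule.box then o2 else o2.map g))
    (H2f : ∀ r s s1 o2, Inst r s (some s1) o2 → Inv s → Inv s1)
    (H2t : ∀ r s o1 s2, Inst r s o1 (some s2) → Inv s → r ≠ Rule.box → Inv s2)
    (π : InfProof) (h0 : ∀ r s, π.lab [] = some (r, s) → Inv s) :
    ∃ τ : InfProof, τ.lab = ctrLab g π.lab := by
  -- the invariant holds at every contracted node
  have inv : ∀ a : List Bool, CtrSet π.lab a → ∀ r s, π.lab a = some (r, s) → Inv s := by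
    intro a
    induction a using List.reverseRecOn with
    | nil => exact fun _ => h0
    | append_singleton a i ih =>
      intro hc r s h
      obtain ⟨hca, hbox⟩ := (ctrSet_snoc π.lab a i).mp hc
      cases hpa : π.lab a with
      | none => rw [π.nojunk a i hpa] at h; exact absurd h (by simp)
      | some rs =>
        have hstep := π.step a rs.1 rs.2 (by rw [hpa])
        have hInv0 := ih hca rs.1 rs.2 (by rw [hpa])
        cases i with
        | false =>
          rw [h] at hstep
          exact H2f _ _ _ _ hstep hInv0
        | true =>
          rw [h] at hstep
          refine H2t _ _ _ _ hstep hInv0 ?_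
          intro hre
          exact hbox rfl (by rw [hpa]; simp [hre])
  refine ⟨⟨ctrLab g π.lab, ?_, ?_, ?_, ?_⟩, rfl⟩
  · rw [ctrLab_isSome]; exact π.root_some
  · intro a i h
    exact ctrLab_none (π.nojunk a i (ctrLab_none_iff.mp h))
  · intro a r s h
    by_cases hca : CtrSet π.lab a
    · rw [ctrLab_of_ctr hca] at h
      cases hpa : π.lab a with
      | none => rw [hpa] at h; exact absurd h (by simp)
      | some rs =>
        rw [hpa] at h
        simp only [Option.map_some, Option.some.injEq, Prod.mk.injEq] at h
        obtain ⟨hr, hs⟩ := h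
        subst hr
        subst hs
        have hstep := π.step a rs.1 rs.2 (by rw [hpa])
        have hInv := inv a hca rs.1 rs.2 (by rw [hpa])
        have H := H1 _ _ _ _ hstep hInv
        have hf : (ctrLab g π.lab (a ++ [false])).map Prod.snd
            = ((π.lab (a ++ [false])).map Prod.snd).map g :=
          ctrLab_snd_of_ctr ((ctrSet_snoc _ _ _).mpr ⟨hca, by simp⟩)
        by_cases hrb : rs.1 = Rule.box
        · have ht : ctrLab g π.lab (a ++ [true]) = π.lab (a ++ [true]) :=
            ctrLab_of_not (fun hc =>
              ((ctrSet_snoc _ _ _).mp hc).2 rfl (by rw [hpa]; simp [hrb]))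
          rw [if_pos hrb] at H
          rw [hf, ht]
          exact H
        · have ht : (ctrLab g π.lab (a ++ [true])).map Prod.snd
              = ((π.lab (a ++ [true])).map Prod.snd).map g :=
            ctrLab_snd_of_ctr ((ctrSet_snoc _ _ _).mpr
              ⟨hca, fun _ => by rw [hpa]; simpa using hrb⟩)
          rw [if_neg hrb] at H
          rw [hf, ht]
          exact H
    · have h' : π.lab a = some (r, s) := by rw [ctrLab_of_not hca] at h; exact h
      have hstep := π.step a r s h'
      have hcf : ¬ CtrSet π.lab (a ++ [false]) := fun hc => hca ((ctrSet_snoc _ _ _).mp hc).1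
      have hct : ¬ CtrSet π.lab (a ++ [true]) := fun hc => hca ((ctrSet_snoc _ _ _).mp hc).1
      rw [ctrLab_of_not hcf, ctrLab_of_not hct]
      exact hstep
  · intro f hf N
    obtain ⟨n, hn1, hn2, hn3⟩ := π.branch f (fun n => by
      rw [← ctrLab_isSome (g := g)]; exact hf n) N
    exact ⟨n, hn1, hn2, by rw [← ctrLab_fst (g := g)] at hn3; exact hn3⟩

end ContractionAux3
section ContractionAux4

lemma erase_cons_pos' {y : Formula} {M : Multiset Formula} (h : y ∈ M) (x : Formula) :
    (x ::ₘ M).erase y = x ::ₘ M.erase y := by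
  rcases eq_or_ne x y with rfl | hxy
  · rw [Multiset.erase_cons_head]
    exact (Multiset.cons_erase h).symm
  · exact Multiset.erase_cons_tail M hxy

lemma atom_notin_boxed (p : ℕ) (P : Multiset Formula) : Formula.atom p ∉ boxed P := by
  simp [boxed]

lemma mem_of_two_le_count_cons {x y : Formula} {M : Multiset Formula}
    (h : 2 ≤ Multiset.count y (x ::ₘ M)) : y ∈ M := by
  rw [Multiset.count_cons] at h
  refine Multiset.count_pos.mp ?_
  split at h <;> omega

lemma mem_of_two_le_count {y : Formula} {M : Multiset Formula}
    (h : 2 ≤ Multiset.count y M) : y ∈ M :=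
  Multiset.count_pos.mp (by omega)

def gL (p : ℕ) : Sequent → Sequent := fun s => (s.1.erase (Formula.atom p), s.2)

def gR (p : ℕ) : Sequent → Sequent := fun s => (s.1, s.2.erase (Formula.atom p))

lemma inst_gL (p : ℕ) (r : Rule) (s : Sequent) (o1 o2 : Option Sequent)
    (h : Inst r s o1 o2) (hs : 2 ≤ Multiset.count (Formula.atom p) s.1) :
    Inst r (gL p s) (o1.map (gL p)) (if r = Rule.box then o2 else o2.map (gL p)) := by
  cases h with
  | ax Γ Δ q =>
    rw [if_neg (by simp)]
    have hmem := mem_of_two_le_count_cons hs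
    simp only [gL, Option.map_none]
    rw [erase_cons_pos' hmem]
    exact Inst.ax _ _ q
  | axBot Γ Δ =>
    rw [if_neg (by simp)]
    have hmem := mem_of_two_le_count_cons hs
    simp only [gL, Option.map_none]
    rw [erase_cons_pos' hmem]
    exact Inst.axBot _ _
  | impL Γ Δ A B =>
    rw [if_neg (by simp)]
    have hmem := mem_of_two_le_count_cons hs
    simp only [gL, Option.map_some]
    rw [erase_cons_pos' hmem, erase_cons_pos' hmem]
    exact Inst.impL _ _ _ _
  | impR Γ Δ A B =>
    rw [if_neg (by simp)]
    have hmem := mem_of_two_le_count hs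
    simp only [gL, Option.map_some, Option.map_none]
    rw [erase_cons_pos' hmem]
    exact Inst.impR _ _ _ _
  | refl Γ Δ A =>
    rw [if_neg (by simp)]
    have hmem := mem_of_two_le_count_cons hs
    have hmem2 : Formula.atom p ∈ Formula.box A ::ₘ Γ := Multiset.mem_cons_of_mem hmem
    simp only [gL, Option.map_some, Option.map_none]
    rw [erase_cons_pos' hmem2, erase_cons_pos' hmem]
    exact Inst.refl _ _ _
  | box Γ Δ A P =>
    rw [if_pos rfl]
    have hmem : Formula.atom p ∈ Γ := by
      rw [Multiset.count_add, Multiset.count_eq_zero_of_notMem (atom_notin_boxed p P)] at hs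
      exact Multiset.count_pos.mp (by omega)
    simp only [gL, Option.map_some]
    rw [Multiset.erase_add_left_pos _ hmem]
    exact Inst.box _ _ _ _
  | cut Γ Δ A =>
    rw [if_neg (by simp)]
    have hmem := mem_of_two_le_count hs
    simp only [gL, Option.map_some]
    rw [erase_cons_pos' hmem]
    exact Inst.cut _ _ _

lemma inst_gR (p : ℕ) (r : Rule) (s : Sequent) (o1 o2 : Option Sequent)
    (h : Inst r s o1 o2) (hs : 2 ≤ Multiset.count (Formula.atom p) s.2) :
    Inst r (gR p s) (o1.map (gR p)) (if r = Rule.box then o2 else o2.map (gR p)) := by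
  cases h with
  | ax Γ Δ q =>
    rw [if_neg (by simp)]
    have hmem := mem_of_two_le_count_cons hs
    simp only [gR, Option.map_none]
    rw [erase_cons_pos' hmem]
    exact Inst.ax _ _ q
  | axBot Γ Δ =>
    rw [if_neg (by simp)]
    simp only [gR, Option.map_none]
    exact Inst.axBot _ _
  | impL Γ Δ A B =>
    rw [if_neg (by simp)]
    have hmem := mem_of_two_le_count hs
    simp only [gR, Option.map_some]
    rw [erase_cons_pos' hmem]
    exact Inst.impL _ _ _ _
  | impR Γ Δ A B =>
    rw [if_neg (by simp)]
    have hmem := mem_of_two_le_count_cons hs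
    simp only [gR, Option.map_some, Option.map_none]
    rw [erase_cons_pos' hmem, erase_cons_pos' hmem]
    exact Inst.impR _ _ _ _
  | refl Γ Δ A =>
    rw [if_neg (by simp)]
    simp only [gR, Option.map_some, Option.map_none]
    exact Inst.refl _ _ _
  | box Γ Δ A P =>
    rw [if_pos rfl]
    have hmem := mem_of_two_le_count_cons hs
    simp only [gR, Option.map_some]
    rw [erase_cons_pos' hmem, erase_cons_pos' hmem]
    exact Inst.box _ _ _ _
  | cut Γ Δ A =>
    rw [if_neg (by simp)]
    have hmem := mem_of_two_le_count hs
    simp only [gR, Option.map_some]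
    rw [erase_cons_pos' hmem]
    exact Inst.cut _ _ _

lemma invL_f (p : ℕ) (r : Rule) (s s1 : Sequent) (o2 : Option Sequent)
    (h : Inst r s (some s1) o2) (hs : 2 ≤ Multiset.count (Formula.atom p) s.1) :
    2 ≤ Multiset.count (Formula.atom p) s1.1 := by
  cases h with
  | impL Γ Δ A B =>
    rw [Multiset.count_cons_of_ne (by simp)] at hs
    exact le_trans hs (Multiset.count_le_count_cons _ _ _)
  | impR Γ Δ A B =>
    exact le_trans hs (Multiset.count_le_count_cons _ _ _)
  | refl Γ Δ A =>
    exact le_trans hs (Multiset.count_le_count_cons _ _ _)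
  | box Γ Δ A P => exact hs
  | cut Γ Δ A => exact hs

lemma invL_t (p : ℕ) (r : Rule) (s : Sequent) (o1 : Option Sequent) (s2 : Sequent)
    (h : Inst r s o1 (some s2)) (hs : 2 ≤ Multiset.count (Formula.atom p) s.1)
    (hr : r ≠ Rule.box) : 2 ≤ Multiset.count (Formula.atom p) s2.1 := by
  cases h with
  | impL Γ Δ A B =>
    rw [Multiset.count_cons_of_ne (by simp)] at hs
    exact hs
  | box Γ Δ A P => exact absurd rfl hr
  | cut Γ Δ A => exact le_trans hs (Multiset.count_le_count_cons _ _ _)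

lemma invR_f (p : ℕ) (r : Rule) (s s1 : Sequent) (o2 : Option Sequent)
    (h : Inst r s (some s1) o2) (hs : 2 ≤ Multiset.count (Formula.atom p) s.2) :
    2 ≤ Multiset.count (Formula.atom p) s1.2 := by
  cases h with
  | impL Γ Δ A B => exact hs
  | impR Γ Δ A B =>
    rw [Multiset.count_cons_of_ne (by simp)] at hs
    exact le_trans hs (Multiset.count_le_count_cons _ _ _)
  | refl Γ Δ A => exact hs
  | box Γ Δ A P =>
    rw [Multiset.count_cons_of_ne (by simp)] at hs
    exact le_trans hs (Multiset.count_le_count_cons _ _ _)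
  | cut Γ Δ A => exact le_trans hs (Multiset.count_le_count_cons _ _ _)

lemma invR_t (p : ℕ) (r : Rule) (s : Sequent) (o1 : Option Sequent) (s2 : Sequent)
    (h : Inst r s o1 (some s2)) (hs : 2 ≤ Multiset.count (Formula.atom p) s.2)
    (hr : r ≠ Rule.box) : 2 ≤ Multiset.count (Formula.atom p) s2.2 := by
  cases h with
  | impL Γ Δ A B => exact le_trans hs (Multiset.count_le_count_cons _ _ _)
  | box Γ Δ A P => exact absurd rfl hr
  | cut Γ Δ A => exact hs

end ContractionAux4
section ContractionAux5

open Classical in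
lemma strong_adm_generic (g : Sequent → Sequent) (Inv : Sequent → Prop)
    (H1 : ∀ r s o1 o2, Inst r s o1 o2 → Inv s →
      Inst r (g s) (o1.map g) (if r = Rule.box then o2 else o2.map g))
    (H2f : ∀ r s s1 o2, Inst r s (some s1) o2 → Inv s → Inv s1)
    (H2t : ∀ r s o1 s2, Inst r s o1 (some s2) → Inv s → r ≠ Rule.box → Inv s2) :
    ∃ f : InfProof → InfProof, Adequate f ∧
      ∀ (π : InfProof) (r : Rule) (s : Sequent), Inv s → π.lab [] = some (r, s) →
        (f π).lab [] = some (r, g s) := by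
  refine ⟨fun π => if h : (∀ r s, π.lab [] = some (r, s) → Inv s)
    then (exists_ctrProof g Inv H1 H2f H2t π h).choose else π, ⟨?_, ?_, ?_⟩, ?_⟩
  · -- nonexpansive
    intro n π τ hsim
    cases n with
    | zero => exact .zero _ _
    | succ n =>
      have hroot := sim_succ_root hsim
      by_cases hπ : (∀ r s, π.lab [] = some (r, s) → Inv s)
      · have hτ : (∀ r s, τ.lab [] = some (r, s) → Inv s) := by rw [← hroot]; exact hπ
        dsimp only
        rw [dif_pos hπ, dif_pos hτ, (exists_ctrProof g Inv H1 H2f H2t π hπ).choose_spec,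
          (exists_ctrProof g Inv H1 H2f H2t τ hτ).choose_spec]
        exact sim_ctrLab g hsim
      · have hτ : ¬ (∀ r s, τ.lab [] = some (r, s) → Inv s) := by rw [← hroot]; exact hπ
        dsimp only
        rw [dif_neg hπ, dif_neg hτ]
        exact hsim
  · -- preserves 𝒫₁
    intro π h
    by_cases hπ : (∀ r s, π.lab [] = some (r, s) → Inv s)
    · dsimp only
      rw [dif_pos hπ, (exists_ctrProof g Inv H1 H2f H2t π hπ).choose_spec]
      exact memP_ctrLab g h
    · dsimp only
      rw [dif_neg hπ]
      exact h
  · -- height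
    intro π
    by_cases hπ : (∀ r s, π.lab [] = some (r, s) → Inv s)
    · dsimp only
      rw [dif_pos hπ, (exists_ctrProof g Inv H1 H2f H2t π hπ).choose_spec,
        height_ctrLab]
    · dsimp only
      rw [dif_neg hπ]
  · -- roots
    intro π r s hInv hroot
    have hπ : (∀ r' s', π.lab [] = some (r', s') → Inv s') := by
      intro r' s' h
      rw [hroot] at h
      simp only [Option.some.injEq, Prod.mk.injEq] at h
      rw [← h.2]
      exact hInv
    dsimp only
    rw [dif_pos hπ, (exists_ctrProof g Inv H1 H2f H2t π hπ).choose_spec,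
      ctrLab_of_ctr (ctrSet_nil _), hroot]
    rfl

end ContractionAux5

/-- atomic contraction (left and right) is strongly admissible in Grz∞ + cut. -/
theorem contraction_strongly_admissible (p : ℕ) :
    (∃ f : InfProof → InfProof, Adequate f ∧
      ∀ (π : InfProof) (Γ Δ : Multiset Formula),
        Proves π (Formula.atom p ::ₘ Formula.atom p ::ₘ Γ, Δ) →
        Proves (f π) (Formula.atom p ::ₘ Γ, Δ)) ∧
    (∃ f : InfProof → InfProof, Adequate f ∧
      ∀ (π : InfProof) (Γ Δ : Multiset Formula),
        Proves π (Γ, Formula.atom p ::ₘ Formula.atom p ::ₘ Δ) →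
        Proves (f π) (Γ, Formula.atom p ::ₘ Δ)) := by
  constructor
  · obtain ⟨f, hf, hroot⟩ := strong_adm_generic (gL p)
      (fun s => 2 ≤ Multiset.count (Formula.atom p) s.1)
      (inst_gL p) (invL_f p) (invL_t p)
    refine ⟨f, hf, ?_⟩
    rintro π Γ Δ ⟨r, hr⟩
    refine ⟨r, ?_⟩
    have hInv : 2 ≤ Multiset.count (Formula.atom p)
        (Formula.atom p ::ₘ Formula.atom p ::ₘ Γ) := by
      rw [Multiset.count_cons_self, Multiset.count_cons_self]
      omega
    have := hroot π r _ hInv hr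
    rw [this]
    simp only [gL, Multiset.erase_cons_head]
  · obtain ⟨f, hf, hroot⟩ := strong_adm_generic (gR p)
      (fun s => 2 ≤ Multiset.count (Formula.atom p) s.2)
      (inst_gR p) (invR_f p) (invR_t p)
    refine ⟨f, hf, ?_⟩
    rintro π Γ Δ ⟨r, hr⟩
    refine ⟨r, ?_⟩
    have hInv : 2 ≤ Multiset.count (Formula.atom p)
        (Formula.atom p ::ₘ Formula.atom p ::ₘ Δ) := by
      rw [Multiset.count_cons_self, Multiset.count_cons_self]
      omega
    have := hroot π r _ hInv hr
    rw [this]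
    simp only [gR, Multiset.erase_cons_head]
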